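/- Let f : ℝ^d → ℝ be differentiable with L-Lipschitz gradient (L ≥ 0). Let x, u, d ∈ ℝ^d satisfy ⟨u, d⟩ ≥ ‖d‖², and let η ≥ 0. Then f(x − η·d) ≤ f(x) + (η/2)·‖∇f(x) − u‖² − η·(1/2 − L·η/2)·‖d‖². -/

import Mathlib

open scoped RealInnerProductSpace BigOperators

theorem aux_descent {d : ℕ} (f : EuclideanSpace ℝ (Fin d) → ℝ) (L : ℝ)
    (hdiff : Differentiable ℝ f)
    (hlip : ∀ x y : EuclideanSpace ℝ (Fin d), ‖gradient f x - gradient f y‖ ≤ L * ‖x - y‖)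
    (x v : EuclideanSpace ℝ (Fin d)) :
    f (x + v) ≤ f x + ⟪gradient f x, v⟫ + L / 2 * ‖v‖ ^ 2 := by
  set g := gradient f x with hg
  have hderiv : ∀ t : ℝ, HasDerivAt (fun t : ℝ => f (x + t • v))
      (⟪gradient f (x + t • v), v⟫) t := by
    intro t
    have h1 : HasDerivAt (fun t : ℝ => x + t • v) v t := by
      simpa using ((hasDerivAt_id t).smul_const v).const_add x
    have h2 := ((hdiff (x + t • v)).hasGradientAt.hasFDerivAt).comp_hasDerivAt t h1
    simpa [InnerProductSpace.toDual_apply_apply, Function.comp_def] using h2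
  set φ : ℝ → ℝ := fun t => f (x + t • v) - t * ⟪g, v⟫ - L * ‖v‖ ^ 2 * (t ^ 2 / 2) with hφ
  have hφderiv : ∀ t : ℝ, HasDerivAt φ
      (⟪gradient f (x + t • v), v⟫ - ⟪g, v⟫ - L * ‖v‖ ^ 2 * t) t := by
    intro t
    have := ((hderiv t).sub ((hasDerivAt_id t).mul_const ⟪g, v⟫)).sub
      (((hasDerivAt_pow 2 t).div_const 2).const_mul (L * ‖v‖ ^ 2))
    exact this.congr_deriv (by ring)
  have hφdiff : Differentiable ℝ φ := fun t => (hφderiv t).differentiableAt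
  have hmono : AntitoneOn φ (Set.Icc (0:ℝ) 1) := by
    apply antitoneOn_of_deriv_nonpos (convex_Icc 0 1) hφdiff.continuous.continuousOn
      (hφdiff.differentiableOn)
    intro t ht
    rw [interior_Icc] at ht
    rw [(hφderiv t).deriv]
    have hb : ⟪gradient f (x + t • v) - g, v⟫ ≤ L * ‖v‖ ^ 2 * t := by
      calc ⟪gradient f (x + t • v) - g, v⟫ ≤ ‖gradient f (x + t • v) - g‖ * ‖v‖ :=
            real_inner_le_norm _ _
        _ ≤ (L * ‖x + t • v - x‖) * ‖v‖ := by
            have := hlip (x + t • v) x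
            exact mul_le_mul_of_nonneg_right (by rw [hg]; exact this) (norm_nonneg _)
        _ = L * ‖v‖ ^ 2 * t := by
            have : ‖x + t • v - x‖ = t * ‖v‖ := by
              rw [add_sub_cancel_left, norm_smul, Real.norm_eq_abs,
                abs_of_nonneg ht.1.le]
            rw [this]; ring
    have : ⟪gradient f (x + t • v), v⟫ - ⟪g, v⟫ = ⟪gradient f (x + t • v) - g, v⟫ := by
      rw [inner_sub_left]
    linarith [hb, this]
  have h01 := hmono (Set.left_mem_Icc.2 zero_le_one) (Set.right_mem_Icc.2 zero_le_one)
    zero_le_one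
  simp only [hφ, zero_smul, add_zero, one_smul, zero_mul, one_mul] at h01
  nlinarith [h01]

/-- Descent inequality with inexact gradient: intermediate step of the paper's Lemma 3. -/
theorem stimulus_descent_general {d : ℕ} (f : EuclideanSpace ℝ (Fin d) → ℝ) (L : ℝ)
    (hL : 0 ≤ L) (hdiff : Differentiable ℝ f)
    (hlip : ∀ x y : EuclideanSpace ℝ (Fin d), ‖gradient f x - gradient f y‖ ≤ L * ‖x - y‖)
    (x u dvec : EuclideanSpace ℝ (Fin d))
    (hud : ⟪u, dvec⟫ ≥ ‖dvec‖ ^ 2)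
    (η : ℝ) (hη : 0 ≤ η) :
    f (x - η • dvec) ≤
      f x + (η / 2) * ‖gradient f x - u‖ ^ 2 - η * (1 / 2 - L * η / 2) * ‖dvec‖ ^ 2 := by
  have key := aux_descent f L hdiff hlip x (-(η • dvec))
  have hx : x + -(η • dvec) = x - η • dvec := by abel
  rw [hx] at key
  set g := gradient f x with hg
  have hinner : ⟪g, -(η • dvec)⟫ = -(η * ⟪g, dvec⟫) := by
    rw [inner_neg_right, real_inner_smul_right]
  have hsplit : ⟪g, dvec⟫ = ⟪g - u, dvec⟫ + ⟪u, dvec⟫ := by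
    rw [inner_sub_left]; ring
  have hcs : -‖g - u‖ * ‖dvec‖ ≤ ⟪g - u, dvec⟫ := by
    have := abs_real_inner_le_norm (g - u) dvec
    have h2 := neg_abs_le (⟪g - u, dvec⟫)
    nlinarith [this, h2]
  have hyoung : ‖g - u‖ * ‖dvec‖ ≤ ‖g - u‖ ^ 2 / 2 + ‖dvec‖ ^ 2 / 2 := by
    nlinarith [sq_nonneg (‖g - u‖ - ‖dvec‖)]
  have hnorm : ‖-(η • dvec)‖ ^ 2 = η ^ 2 * ‖dvec‖ ^ 2 := by
    rw [norm_neg, norm_smul, Real.norm_eq_abs, abs_of_nonneg hη, mul_pow]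
  rw [hinner, hnorm] at key
  nlinarith [key, mul_le_mul_of_nonneg_left hyoung hη, mul_le_mul_of_nonneg_left hcs hη,
    mul_le_mul_of_nonneg_left hud.le hη]
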